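/- arXiv:2204.01373 — 2 statements merged into one kernel-verified Lean document; each statement's English description precedes it below -/
import Mathlib

section
/- For every integer n ≥ 1 and all real numbers a_1,…,a_n, letting S_t := ∑_{s=1}^t a_s denote the partial sums, the Bartlett-kernel quadratic form with bandwidth equal to sample size admits the exact decomposition: (1/n) ∑_{i=1}^n ∑_{j=1}^n (1 − |i−j|/n) a_i a_j = (1/n²) ∑_{t=1}^n S_t² + (1/n²) ∑_{t=1}^n (S_t − S_n)². -/
open Finset

lemma bartlett_aux1 (n : ℕ) (a : ℕ → ℝ) :
    ∑ t ∈ Icc 1 n, (∑ s ∈ Icc 1 t, a s) ^ 2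
      = ∑ i ∈ Icc 1 n, ∑ j ∈ Icc 1 n, ((n + 1 - max i j : ℕ) : ℝ) * (a i * a j) := by
  have step : ∀ t ∈ Icc 1 n, (∑ s ∈ Icc 1 t, a s) ^ 2
      = ∑ i ∈ Icc 1 n, ∑ j ∈ Icc 1 n, (if max i j ≤ t then a i * a j else 0) := by
    intro t ht
    have ht' : t ≤ n := (mem_Icc.mp ht).2
    have h1 : (∑ s ∈ Icc 1 t, a s) = ∑ s ∈ Icc 1 n, if s ≤ t then a s else 0 := by
      rw [sum_ite, sum_const_zero, add_zero]
      apply sum_congr _ (fun _ _ => rfl)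
      ext s; simp only [mem_filter, mem_Icc]; omega
    rw [sq, h1, Finset.sum_mul_sum]
    refine sum_congr rfl fun i _ => sum_congr rfl fun j _ => ?_
    by_cases hi : i ≤ t <;> by_cases hj : j ≤ t <;>
      simp [hi, hj, max_le_iff]
  rw [sum_congr rfl step, Finset.sum_comm]
  refine sum_congr rfl fun i hi => ?_
  rw [Finset.sum_comm]
  refine sum_congr rfl fun j hj => ?_
  rw [sum_ite, sum_const_zero, add_zero, sum_const, nsmul_eq_mul]
  congr 2
  have : filter (fun t => max i j ≤ t) (Icc 1 n) = Icc (max i j) n := by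
    ext t
    simp only [mem_filter, mem_Icc]
    have := mem_Icc.mp hi
    omega
  rw [this, Nat.card_Icc]

lemma bartlett_aux2 (n : ℕ) (a : ℕ → ℝ) :
    ∑ t ∈ Icc 1 n, ((∑ s ∈ Icc 1 t, a s) - ∑ s ∈ Icc 1 n, a s) ^ 2
      = ∑ i ∈ Icc 1 n, ∑ j ∈ Icc 1 n, ((min i j - 1 : ℕ) : ℝ) * (a i * a j) := by
  have step : ∀ t ∈ Icc 1 n, ((∑ s ∈ Icc 1 t, a s) - ∑ s ∈ Icc 1 n, a s) ^ 2
      = ∑ i ∈ Icc 1 n, ∑ j ∈ Icc 1 n, (if t < min i j then a i * a j else 0) := by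
    intro t ht
    have ht' : t ≤ n := (mem_Icc.mp ht).2
    have h1 : (∑ s ∈ Icc 1 t, a s) - ∑ s ∈ Icc 1 n, a s
        = -(∑ s ∈ Icc 1 n, if t < s then a s else 0) := by
      have h2 : (∑ s ∈ Icc 1 n, a s)
          = (∑ s ∈ Icc 1 n, if s ≤ t then a s else 0)
            + ∑ s ∈ Icc 1 n, if t < s then a s else 0 := by
        rw [← sum_add_distrib]
        refine sum_congr rfl fun s _ => ?_
        rcases le_or_gt s t with h | h
        · simp [h, Nat.not_lt.mpr h]
        · simp [Nat.not_le.mpr h, h]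
      have h3 : (∑ s ∈ Icc 1 t, a s) = ∑ s ∈ Icc 1 n, if s ≤ t then a s else 0 := by
        rw [sum_ite, sum_const_zero, add_zero]
        apply sum_congr _ (fun _ _ => rfl)
        ext s; simp only [mem_filter, mem_Icc]; omega
      rw [h2, h3]; ring
    rw [h1, neg_sq, sq, Finset.sum_mul_sum]
    refine sum_congr rfl fun i _ => sum_congr rfl fun j _ => ?_
    by_cases hi : t < i <;> by_cases hj : t < j <;>
      simp [hi, hj, lt_min_iff]
  rw [sum_congr rfl step, Finset.sum_comm]
  refine sum_congr rfl fun i hi => ?_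
  rw [Finset.sum_comm]
  refine sum_congr rfl fun j hj => ?_
  rw [sum_ite, sum_const_zero, add_zero, sum_const, nsmul_eq_mul]
  congr 2
  have : filter (fun t => t < min i j) (Icc 1 n) = Icc 1 (min i j - 1) := by
    ext t
    simp only [mem_filter, mem_Icc]
    have h1 := mem_Icc.mp hi
    have h2 := mem_Icc.mp hj
    omega
  rw [this, Nat.card_Icc]
  omega

/-- **Bartlett-kernel decomposition.** For every integer `n ≥ 1` and all real numbers
`a_1, …, a_n`, with partial sums `S_t = ∑_{s=1}^t a_s`, the Bartlett-kernel quadratic form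
with bandwidth equal to the sample size satisfies
`(1/n) ∑_{i=1}^n ∑_{j=1}^n (1 − |i−j|/n) a_i a_j
  = (1/n²) ∑_{t=1}^n S_t² + (1/n²) ∑_{t=1}^n (S_t − S_n)²`. -/
theorem bartlett_quadratic_form_decomposition (n : ℕ) (hn : 1 ≤ n) (a : ℕ → ℝ) :
    (n : ℝ)⁻¹ *
        ∑ i ∈ Finset.Icc 1 n, ∑ j ∈ Finset.Icc 1 n,
          (1 - |(i : ℝ) - (j : ℝ)| / (n : ℝ)) * (a i * a j)
      = ((n : ℝ) ^ 2)⁻¹ * ∑ t ∈ Finset.Icc 1 n, (∑ s ∈ Finset.Icc 1 t, a s) ^ 2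
        + ((n : ℝ) ^ 2)⁻¹ * ∑ t ∈ Finset.Icc 1 n,
            ((∑ s ∈ Finset.Icc 1 t, a s) - ∑ s ∈ Finset.Icc 1 n, a s) ^ 2 := by
  have hn0 : (n : ℝ) ≠ 0 := by positivity
  have hR : (∑ t ∈ Icc 1 n, (∑ s ∈ Icc 1 t, a s) ^ 2)
      + ∑ t ∈ Icc 1 n, ((∑ s ∈ Icc 1 t, a s) - ∑ s ∈ Icc 1 n, a s) ^ 2
      = ∑ i ∈ Icc 1 n, ∑ j ∈ Icc 1 n,
          ((((n + 1 - max i j : ℕ) : ℝ) + ((min i j - 1 : ℕ) : ℝ)) * (a i * a j)) := by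
    rw [bartlett_aux1, bartlett_aux2, ← sum_add_distrib]
    refine sum_congr rfl fun i _ => ?_
    rw [← sum_add_distrib]
    exact sum_congr rfl fun j _ => (add_mul _ _ _).symm
  rw [← mul_add, hR]
  have key : ∀ i ∈ Icc 1 n, ∀ j ∈ Icc 1 n,
      (1 - |(i : ℝ) - (j : ℝ)| / (n : ℝ)) * (a i * a j)
        = (n : ℝ)⁻¹ * ((((n + 1 - max i j : ℕ) : ℝ) + ((min i j - 1 : ℕ) : ℝ)) * (a i * a j)) := by
    intro i hi j hj
    have h1 := mem_Icc.mp hi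
    have h2 := mem_Icc.mp hj
    have hc : ((n + 1 - max i j : ℕ) : ℝ) + ((min i j - 1 : ℕ) : ℝ)
        = (n : ℝ) - |(i : ℝ) - (j : ℝ)| := by
      rcases le_total i j with h | h
      · rw [abs_of_nonpos (sub_nonpos.mpr ((Nat.cast_le (α := ℝ)).mpr h)),
          max_eq_right h, min_eq_left h]
        have e1 : ((n + 1 - j : ℕ) : ℝ) = (n : ℝ) + 1 - j := by
          have : j ≤ n + 1 := by omega
          push_cast [Nat.cast_sub this]; ring
        have e2 : ((i - 1 : ℕ) : ℝ) = (i : ℝ) - 1 := by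
          have : 1 ≤ i := h1.1
          push_cast [Nat.cast_sub this]; ring
        rw [e1, e2]; ring
      · rw [abs_of_nonneg (sub_nonneg.mpr ((Nat.cast_le (α := ℝ)).mpr h)),
          max_eq_left h, min_eq_right h]
        have e1 : ((n + 1 - i : ℕ) : ℝ) = (n : ℝ) + 1 - i := by
          have : i ≤ n + 1 := by omega
          push_cast [Nat.cast_sub this]; ring
        have e2 : ((j - 1 : ℕ) : ℝ) = (j : ℝ) - 1 := by
          have : 1 ≤ j := h2.1
          push_cast [Nat.cast_sub this]; ring
        rw [e1, e2]; ring
    rw [hc]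
    field_simp
  rw [sum_congr rfl fun i hi => sum_congr rfl fun j hj => key i hi j hj]
  simp only [← Finset.mul_sum]
  rw [← mul_assoc, ← mul_inv, ← sq]
end

section
/- Beveridge–Nelson-type partial-sum identity for a finite-order vector autoregression: let q, n, d ≥ 1 be integers, let Φ_1,…,Φ_q be real d×d matrices such that A := I_d − ∑_{j=1}^q Φ_j is invertible, and let (w_t)_{t=1−q}^n and (ε_t)_{t=1}^n be ℝ^d-valued sequences satisfying w_t = ∑_{j=1}^q Φ_j w_{t−j} + ε_t for every t = 1,…,n. Define w̄_t := A^{-1} ∑_{i=1}^q (∑_{j=i}^q Φ_j) w_{t+1−i} for t = 0,…,n. Then ∑_{t=1}^n w_t = A^{-1} ∑_{t=1}^n ε_t + w̄_0 − w̄_n. -/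
open Matrix

noncomputable section

lemma teleInt {V : Type*} [AddCommGroup V] (f : ℤ → V) (n : ℕ) :
    ∑ t ∈ Finset.Icc (1 : ℤ) (n : ℤ), (f (t - 1) - f t) = f 0 - f (n : ℤ) := by
  induction n with
  | zero => simp
  | succ m ih =>
      have hins : Finset.Icc (1 : ℤ) ((m : ℤ) + 1)
          = insert ((m : ℤ) + 1) (Finset.Icc (1 : ℤ) (m : ℤ)) := by
        ext x; simp; omega
      push_cast
      rw [hins, Finset.sum_insert (by simp), ih]
      simp only [add_sub_cancel_right]
      abel

lemma teleNat {V : Type*} [AddCommGroup V] (g : ℕ → V) (m : ℕ) :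
    ∑ i ∈ Finset.Icc 1 m, (g i - g (i - 1)) = g m - g 0 := by
  induction m with
  | zero => simp
  | succ k ih =>
      rw [Finset.sum_Icc_succ_top (by omega), ih]
      simp only [Nat.add_sub_cancel]
      abel

lemma sum_mulVec' {d : ℕ} {ι : Type*} (s : Finset ι) (A : ι → Matrix (Fin d) (Fin d) ℝ)
    (x : Fin d → ℝ) : (∑ i ∈ s, A i) *ᵥ x = ∑ i ∈ s, A i *ᵥ x := by
  induction s using Finset.cons_induction with
  | empty => simp [Matrix.zero_mulVec]
  | cons a s ha ih => simp [Finset.sum_cons, Matrix.add_mulVec, ih]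

lemma bn_key (d q : ℕ) (Φ : ℕ → Matrix (Fin d) (Fin d) ℝ) (w : ℤ → Fin d → ℝ) (t : ℤ) :
    (∑ j ∈ Finset.Icc 1 q, Φ j *ᵥ w (t - (j : ℤ)))
      - (∑ j ∈ Finset.Icc 1 q, Φ j) *ᵥ w t
    = (∑ i ∈ Finset.Icc 1 q, (∑ j ∈ Finset.Icc i q, Φ j) *ᵥ w ((t - 1) + 1 - (i : ℤ)))
      - (∑ i ∈ Finset.Icc 1 q, (∑ j ∈ Finset.Icc i q, Φ j) *ᵥ w (t + 1 - (i : ℤ))) := by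
  rw [← Finset.sum_sub_distrib]
  have h1 : ∀ i ∈ Finset.Icc 1 q,
      (∑ j ∈ Finset.Icc i q, Φ j) *ᵥ w ((t - 1) + 1 - (i : ℤ))
        - (∑ j ∈ Finset.Icc i q, Φ j) *ᵥ w (t + 1 - (i : ℤ))
      = ∑ j ∈ Finset.Icc i q, (Φ j *ᵥ w (t - (i : ℤ)) - Φ j *ᵥ w (t + 1 - (i : ℤ))) := by
    intro i _
    have ht : (t - 1) + 1 - (i : ℤ) = t - (i : ℤ) := by ring
    rw [ht, sum_mulVec', sum_mulVec', Finset.sum_sub_distrib]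
  rw [Finset.sum_congr rfl h1]
  rw [Finset.sum_comm' (t' := Finset.Icc 1 q) (s' := fun j => Finset.Icc 1 j)
    (by intro x y; simp only [Finset.mem_Icc]; omega)]
  have h2 : ∀ j ∈ Finset.Icc 1 q,
      ∑ i ∈ Finset.Icc 1 j, (Φ j *ᵥ w (t - (i : ℤ)) - Φ j *ᵥ w (t + 1 - (i : ℤ)))
      = Φ j *ᵥ w (t - (j : ℤ)) - Φ j *ᵥ w t := by
    intro j _
    have := teleNat (fun i : ℕ => Φ j *ᵥ w (t - (i : ℤ))) j
    simp only [Nat.cast_zero, sub_zero] at this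
    rw [← this]
    refine Finset.sum_congr rfl fun i hi => ?_
    have hi1 : 1 ≤ i := (Finset.mem_Icc.mp hi).1
    have : ((i - 1 : ℕ) : ℤ) = (i : ℤ) - 1 := by omega
    rw [this]
    ring_nf
  rw [Finset.sum_congr rfl h2, Finset.sum_sub_distrib, sum_mulVec']

/-- `w̄_t = A⁻¹ ∑_{i=1}^q (∑_{j=i}^q Φ_j) w_{t+1−i}`, with `A = I − ∑_{j=1}^q Φ_j`. -/
def bnBar (d q : ℕ) (Φ : ℕ → Matrix (Fin d) (Fin d) ℝ) (w : ℤ → Fin d → ℝ) (t : ℤ) :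
    Fin d → ℝ :=
  ((1 : Matrix (Fin d) (Fin d) ℝ) - ∑ j ∈ Finset.Icc 1 q, Φ j)⁻¹ *ᵥ
    ∑ i ∈ Finset.Icc 1 q, (∑ j ∈ Finset.Icc i q, Φ j) *ᵥ w ((t : ℤ) + 1 - (i : ℤ))

/-- **Beveridge–Nelson-type partial-sum identity for a finite-order VAR.** Let
`q, n, d ≥ 1`, let `Φ_1, …, Φ_q` be real `d×d` matrices with `A = I − ∑_{j=1}^q Φ_j`
invertible, and let `(w_t)_{t=1−q}^n`, `(ε_t)_{t=1}^n` satisfy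
`w_t = ∑_{j=1}^q Φ_j w_{t−j} + ε_t` for `t = 1, …, n`.  With
`w̄_t = A⁻¹ ∑_{i=1}^q (∑_{j=i}^q Φ_j) w_{t+1−i}`, one has
`∑_{t=1}^n w_t = A⁻¹ ∑_{t=1}^n ε_t + w̄_0 − w̄_n`. -/
theorem var_beveridge_nelson_partial_sum (d q n : ℕ) (hd : 1 ≤ d) (hq : 1 ≤ q)
    (hn : 1 ≤ n) (Φ : ℕ → Matrix (Fin d) (Fin d) ℝ) (w e : ℤ → Fin d → ℝ)
    (hA : IsUnit ((1 : Matrix (Fin d) (Fin d) ℝ) - ∑ j ∈ Finset.Icc 1 q, Φ j).det)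
    (hrec : ∀ t : ℤ, 1 ≤ t → t ≤ (n : ℤ) →
      w t = (∑ j ∈ Finset.Icc 1 q, Φ j *ᵥ w (t - (j : ℤ))) + e t) :
    ∑ t ∈ Finset.Icc (1 : ℤ) (n : ℤ), w t
      = ((1 : Matrix (Fin d) (Fin d) ℝ) - ∑ j ∈ Finset.Icc 1 q, Φ j)⁻¹ *ᵥ
          (∑ t ∈ Finset.Icc (1 : ℤ) (n : ℤ), e t)
        + bnBar d q Φ w 0 - bnBar d q Φ w (n : ℤ) := by
  set A : Matrix (Fin d) (Fin d) ℝ := (1 : Matrix (Fin d) (Fin d) ℝ) - ∑ j ∈ Finset.Icc 1 q, Φ j with hAdef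
  set y : ℤ → Fin d → ℝ :=
    fun t => ∑ i ∈ Finset.Icc 1 q, (∑ j ∈ Finset.Icc i q, Φ j) *ᵥ w (t + 1 - (i : ℤ)) with hy
  -- A *ᵥ (partial sum of w) = partial sum of e + (y 0 - y n)
  have key : A *ᵥ (∑ t ∈ Finset.Icc (1 : ℤ) (n : ℤ), w t)
      = (∑ t ∈ Finset.Icc (1 : ℤ) (n : ℤ), e t) + (y 0 - y (n : ℤ)) := by
    have h1 : ∀ t ∈ Finset.Icc (1 : ℤ) (n : ℤ),
        A *ᵥ w t = e t + (y (t - 1) - y t) := by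
      intro t ht
      rw [Finset.mem_Icc] at ht
      rw [hAdef, Matrix.sub_mulVec, Matrix.one_mulVec]
      nth_rewrite 1 [hrec t ht.1 ht.2]
      have h := bn_key d q Φ w t
      simp only [hy]
      rw [← h]
      abel
    calc A *ᵥ ∑ t ∈ Finset.Icc (1 : ℤ) (n : ℤ), w t
        = ∑ t ∈ Finset.Icc (1 : ℤ) (n : ℤ), A *ᵥ w t := by
          exact map_sum (Matrix.mulVecLin A) w (Finset.Icc (1 : ℤ) (n : ℤ))
      _ = ∑ t ∈ Finset.Icc (1 : ℤ) (n : ℤ), (e t + (y (t - 1) - y t)) :=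
          Finset.sum_congr rfl h1
      _ = (∑ t ∈ Finset.Icc (1 : ℤ) (n : ℤ), e t) + (y 0 - y (n : ℤ)) := by
          rw [Finset.sum_add_distrib, teleInt y n]
  have hinv : A⁻¹ * A = 1 := Matrix.nonsing_inv_mul A hA
  have : ∑ t ∈ Finset.Icc (1 : ℤ) (n : ℤ), w t
      = A⁻¹ *ᵥ (A *ᵥ ∑ t ∈ Finset.Icc (1 : ℤ) (n : ℤ), w t) := by
    rw [Matrix.mulVec_mulVec, hinv, Matrix.one_mulVec]
  rw [this, key, Matrix.mulVec_add, Matrix.mulVec_sub]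
  have hb0 : bnBar d q Φ w 0 = A⁻¹ *ᵥ y 0 := rfl
  have hbn : bnBar d q Φ w (n : ℤ) = A⁻¹ *ᵥ y (n : ℤ) := rfl
  rw [hb0, hbn]
  abel
end
end
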